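/- For all real σ with 0 < σ < 1/2, all real t, and all real x ≥ (1+√3)/4, one has ((2x+1-σ)² + t²)/((2x+σ)² + t²) < { ((2x+1)/(2x))² · (1 - (1+4x)((σ-1)σ + t²)/((1+2x)²((σ-1)σ + t² + 4x²))) }^(1-2σ). -/

import Mathlib

lemma core_r_ineq (σ : ℝ) (hσ0 : 0 < σ) (hσ : σ < 1/2) (r : ℝ) (hr : 0 < r) :
    (1 + (1-σ)*r) / (1 + σ*r) < (1 + r) ^ (1 - 2*σ) := by
  have hσ1 : σ < 1 := by linarith
  set f : ℝ → ℝ := fun y =>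
    (1 - 2*σ) * Real.log (1+y) - Real.log (1+(1-σ)*y) + Real.log (1+σ*y) with hf
  have hderiv : ∀ y ∈ Set.Ici (0:ℝ),
      HasDerivAt f ((1-2*σ) * (1/(1+y)) - (1-σ)/(1+(1-σ)*y) + σ/(1+σ*y)) y := by
    intro y hy
    have hy0 : (0:ℝ) ≤ y := hy
    have h1 : (0:ℝ) < 1 + y := by linarith
    have h2 : (0:ℝ) < 1 + (1-σ)*y := by nlinarith
    have h3 : (0:ℝ) < 1 + σ*y := by nlinarith
    have d1 : HasDerivAt (fun y : ℝ => 1 + y) 1 y := by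
      simpa using (hasDerivAt_id y).const_add 1
    have d2 : HasDerivAt (fun y : ℝ => 1 + (1-σ)*y) (1-σ) y := by
      simpa using ((hasDerivAt_id y).const_mul (1-σ)).const_add 1
    have d3 : HasDerivAt (fun y : ℝ => 1 + σ*y) σ y := by
      simpa using ((hasDerivAt_id y).const_mul σ).const_add 1
    have l1 := (d1.log h1.ne').const_mul (1-2*σ)
    have l2 := d2.log h2.ne'
    have l3 := d3.log h3.ne'
    have := (l1.sub l2).add l3
    exact this
  have hmono : StrictMonoOn f (Set.Ici 0) := by
    apply strictMonoOn_of_deriv_pos (convex_Ici 0)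
      (fun y hy => (hderiv y hy).continuousAt.continuousWithinAt)
    intro y hy
    rw [interior_Ici] at hy
    have hy0 : (0:ℝ) < y := hy
    rw [(hderiv y hy0.le).deriv]
    have h1 : (0:ℝ) < 1 + y := by linarith
    have h2 : (0:ℝ) < 1 + (1-σ)*y := by nlinarith
    have h3 : (0:ℝ) < 1 + σ*y := by nlinarith
    have key : (1-2*σ)*(1/(1+y)) - (1-σ)/(1+(1-σ)*y) + σ/(1+σ*y)
        = σ*(1-σ)*(1-2*σ)*y^2 / ((1+y)*((1+(1-σ)*y)*(1+σ*y))) := by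
      rw [mul_one_div, div_sub_div _ _ h1.ne' h2.ne', div_add_div _ _ (by positivity) h3.ne', div_eq_div_iff (by positivity) (by positivity)]
      ring
    rw [key]
    apply div_pos
    · have hc : 0 < σ*(1-σ)*(1-2*σ) := by
        apply mul_pos (mul_pos hσ0 (by linarith)) (by linarith)
      exact mul_pos hc (pow_pos hy0 2)
    · exact mul_pos h1 (mul_pos h2 h3)
  have hf0 : f 0 = 0 := by simp [hf]
  have hpos := hmono Set.self_mem_Ici (Set.mem_Ici.2 hr.le) hr
  rw [hf0] at hpos
  have h1 : (0:ℝ) < 1 + r := by linarith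
  have h2 : (0:ℝ) < 1 + (1-σ)*r := by nlinarith
  have h3 : (0:ℝ) < 1 + σ*r := by nlinarith
  rw [Real.lt_rpow_iff_log_lt (by positivity) h1, Real.log_div h2.ne' h3.ne']
  simp only [hf] at hpos
  linarith

lemma core_Vs_ineq (σ V s : ℝ) (hσ0 : 0 < σ) (hσ : σ < 1/2) (hV : 0 < V) (hs : 0 < s) :
    (V + (1-σ)*s) / (V + σ*s) < ((V + s)/V) ^ (1 - 2*σ) := by
  have hr : 0 < s / V := div_pos hs hV
  have h := core_r_ineq σ hσ0 hσ (s/V) hr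
  have hσ1 : σ < 1 := by linarith
  have hVs : 0 < V + σ*s := by nlinarith
  have h3 : 0 < 1 + σ*(s/V) := by positivity
  have e1 : (V + (1-σ)*s)/(V + σ*s) = (1 + (1-σ)*(s/V))/(1 + σ*(s/V)) := by
    rw [div_eq_div_iff hVs.ne' h3.ne']
    field_simp
  have e2 : (V + s)/V = 1 + s/V := by field_simp
  rw [e1, e2]
  exact h

theorem ratio_lt_rpow' (σ t x : ℝ) (hσ0 : 0 < σ) (hσ : σ < 1 / 2)
    (hx : (1 + Real.sqrt 3) / 4 ≤ x) :
    ((2 * x + 1 - σ) ^ 2 + t ^ 2) / ((2 * x + σ) ^ 2 + t ^ 2) <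
      (((2 * x + 1) / (2 * x)) ^ 2 *
          (1 - (1 + 4 * x) * ((σ - 1) * σ + t ^ 2) /
            ((1 + 2 * x) ^ 2 * ((σ - 1) * σ + t ^ 2 + 4 * x ^ 2)))) ^ (1 - 2 * σ) := by
  have hs3 : (1:ℝ) ≤ Real.sqrt 3 := by
    rw [show (1:ℝ) = Real.sqrt 1 from Real.sqrt_one.symm]
    exact Real.sqrt_le_sqrt (by norm_num)
  have hx2 : (1:ℝ)/2 ≤ x := by linarith
  have hV : 0 < (σ-1)*σ + t^2 + 4*x^2 := by
    nlinarith [sq_nonneg (σ - 1/2), sq_nonneg t, sq_nonneg (x - 1/2)]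
  have hs : (0:ℝ) < 4*x + 1 := by linarith
  have hxne : (2*x : ℝ) ≠ 0 := by positivity
  have h12x : ((1:ℝ) + 2*x) ≠ 0 := by positivity
  have hbase : (((2 * x + 1) / (2 * x)) ^ 2 *
          (1 - (1 + 4 * x) * ((σ - 1) * σ + t ^ 2) /
            ((1 + 2 * x) ^ 2 * ((σ - 1) * σ + t ^ 2 + 4 * x ^ 2))))
      = (((σ-1)*σ + t^2 + 4*x^2) + (4*x+1)) / ((σ-1)*σ + t^2 + 4*x^2) := by
    have hV' := hV.ne'
    rw [div_pow, one_sub_div (by positivity), div_mul_div_comm, div_eq_div_iff (by positivity) hV']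
    ring
  have hnum : (2 * x + 1 - σ) ^ 2 + t ^ 2
      = ((σ-1)*σ + t^2 + 4*x^2) + (1-σ)*(4*x+1) := by ring
  have hden : (2 * x + σ) ^ 2 + t ^ 2
      = ((σ-1)*σ + t^2 + 4*x^2) + σ*(4*x+1) := by ring
  rw [hbase, hnum, hden]
  exact core_Vs_ineq σ _ _ hσ0 hσ hV hs
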